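/- Let G be a graph, G' the co-bipartite graph obtained from G by taking two clique copies V_1 = {v_i^1} and V_2 = {v_i^2} of V(G) with v_i^1 adjacent to v_j^2 iff v_j ∈ N_G[v_i]. Then any dominating sequence of G' whose first vertex lies in V_1 contains at most one vertex of V_2, and if it contains a vertex of V_2 then that vertex is the last vertex of the sequence. -/

import Mathlib

open Finset

variable {V : Type*}

/-- The closed neighborhood of a vertex. -/
def CN (G : SimpleGraph V) (v : V) : Set V := insert v (G.neighborSet v)

/-- A closed neighborhood (legal) sequence: distinct vertices, each footprinting
a vertex not dominated by the closed neighborhoods of earlier vertices. -/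
def IsCNSeq (G : SimpleGraph V) (S : List V) : Prop :=
  S.Nodup ∧ ∀ i : Fin S.length, ∃ u, u ∈ CN G (S.get i) ∧
    ∀ j : Fin S.length, j < i → u ∉ CN G (S.get j)

/-- A dominating sequence: a closed neighborhood sequence whose vertex set dominates. -/
def IsDomSeq (G : SimpleGraph V) (S : List V) : Prop :=
  IsCNSeq G S ∧ ∀ v : V, ∃ u ∈ S, v ∈ CN G u

/-- The Grundy domination number: the maximum length of a dominating sequence. -/
noncomputable def grundyDom (G : SimpleGraph V) : ℕ :=
  sSup {n | ∃ S : List V, IsDomSeq G S ∧ S.length = n}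

/-- The co-bipartite graph `G'` built from `G`: two clique copies `V₁, V₂` of `V(G)`,
with `vᵢ¹` adjacent to `vⱼ²` iff `vⱼ ∈ N_G[vᵢ]`. -/
def cobip (G : SimpleGraph V) : SimpleGraph (V ⊕ V) :=
  SimpleGraph.fromRel (fun u v =>
    match u, v with
    | Sum.inl _, Sum.inl _ => True
    | Sum.inr _, Sum.inr _ => True
    | Sum.inl i, Sum.inr j => i = j ∨ G.Adj i j
    | _, _ => False)


lemma inl_mem_CN (G : SimpleGraph V) (a x : V) :
    (Sum.inl x : V ⊕ V) ∈ CN (cobip G) (Sum.inl a) := by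
  by_cases h : x = a
  · subst h; exact Set.mem_insert _ _
  · refine Set.mem_insert_iff.mpr (Or.inr ?_)
    simp only [SimpleGraph.mem_neighborSet, cobip, SimpleGraph.fromRel_adj]
    exact ⟨by simp only [ne_eq, Sum.inl.injEq]; exact fun e => h e.symm, Or.inl trivial⟩

lemma inr_mem_CN (G : SimpleGraph V) (b y : V) :
    (Sum.inr y : V ⊕ V) ∈ CN (cobip G) (Sum.inr b) := by
  by_cases h : y = b
  · subst h; exact Set.mem_insert _ _
  · refine Set.mem_insert_iff.mpr (Or.inr ?_)
    simp only [SimpleGraph.mem_neighborSet, cobip, SimpleGraph.fromRel_adj]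
    exact ⟨by simp only [ne_eq, Sum.inr.injEq]; exact fun e => h e.symm, Or.inl trivial⟩

/-- Any dominating sequence of `G'` starting in `V₁` contains at most one vertex of `V₂`,
and if it contains one, it is the last vertex of the sequence. -/
theorem cobip_domSeq_at_most_one_inr {V : Type*} [Fintype V] [DecidableEq V]
    (G : SimpleGraph V) (S : List (V ⊕ V)) (hS : IsDomSeq (cobip G) S)
    (hne : S ≠ []) (hhead : (S.head hne).isLeft) :
    (S.filter (fun w => w.isRight)).length ≤ 1 ∧
      ∀ i : Fin S.length, (S.get i).isRight → (i : ℕ) = S.length - 1 := by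
  obtain ⟨⟨hnd, hfp⟩, _hdom⟩ := hS
  have hlen : 0 < S.length := List.length_pos_iff.mpr hne
  obtain ⟨a, ha⟩ : ∃ a, S.get ⟨0, hlen⟩ = Sum.inl a := by
    have h0 : S.head hne = S.get ⟨0, hlen⟩ := by
      cases S with
      | nil => exact absurd rfl hne
      | cons w t => rfl
    rw [h0] at hhead
    exact Sum.isLeft_iff.mp hhead
  have key : ∀ i : Fin S.length, (S.get i).isRight → (i : ℕ) = S.length - 1 := by
    intro i hi
    obtain ⟨b, hb⟩ := Sum.isRight_iff.mp hi
    by_contra h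
    have hlt : (i : ℕ) + 1 < S.length := by
      have := i.isLt; omega
    obtain ⟨u, _hu, hmin⟩ := hfp ⟨(i : ℕ) + 1, hlt⟩
    cases u with
    | inl x =>
        exact hmin ⟨0, hlen⟩ (by simp [Fin.lt_def]) (ha ▸ inl_mem_CN G a x)
    | inr y =>
        exact hmin i (by simp [Fin.lt_def]) (hb ▸ inr_mem_CN G b y)
  refine ⟨?_, key⟩
  by_contra h
  push_neg at h
  have h2 : 2 ≤ (S.filter (fun w => w.isRight)).length := h
  set l := S.filter (fun w => w.isRight) with hl
  have hlnd : l.Nodup := hnd.filter _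
  have h0 : (0 : ℕ) < l.length := by omega
  have h1 : (1 : ℕ) < l.length := by omega
  have hne01 : l.get ⟨0, h0⟩ ≠ l.get ⟨1, h1⟩ := by
    intro he
    have := (List.Nodup.get_inj_iff hlnd).mp he
    simp at this
  have hmem0 : l.get ⟨0, h0⟩ ∈ l := l.get_mem ⟨0, h0⟩
  have hmem1 : l.get ⟨1, h1⟩ ∈ l := l.get_mem ⟨1, h1⟩
  obtain ⟨hm0, hr0⟩ := List.mem_filter.mp hmem0
  obtain ⟨hm1, hr1⟩ := List.mem_filter.mp hmem1
  obtain ⟨i0, hi0⟩ := List.get_of_mem hm0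
  obtain ⟨i1, hi1⟩ := List.get_of_mem hm1
  have e0 : (i0 : ℕ) = S.length - 1 := key i0 (by rw [hi0]; exact hr0)
  have e1 : (i1 : ℕ) = S.length - 1 := key i1 (by rw [hi1]; exact hr1)
  have : i0 = i1 := Fin.ext (e0.trans e1.symm)
  exact hne01 (by rw [← hi0, ← hi1, this])
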